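/- Let f and g be partial Boolean functions over n variables such that the union of the onset and don't-care set of f is contained in the union of the onset and don't-care set of g (i.e., for every instance x, if g x = some false then f x = some false). Let x be a positive instance of both f and g. Then every sufficient reason of f(x)=1 is subsumed by some sufficient reason of g(x)=1. -/

import Mathlib

/-- An instance `x : Fin n → Bool` satisfies the term `t` if `x i = b` whenever `t i = some b`. -/
def Satisfies {n : ℕ} (x : Fin n → Bool) (t : Fin n → Option Bool) : Prop :=
  ∀ i b, t i = some b → x i = b

/-- The set of instances satisfying a term. -/
def termSet {n : ℕ} (t : Fin n → Option Bool) : Set (Fin n → Bool) :=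
  {x | Satisfies x t}

/-- A term is an implicant of a partial Boolean function `f` if `f` is never `some false` on it. -/
def Implicant {n : ℕ} (f : (Fin n → Bool) → Option Bool) (t : Fin n → Option Bool) : Prop :=
  ∀ x ∈ termSet t, f x ≠ some false

/-- A prime implicant: an implicant not properly subsumed by any other implicant. -/
def PrimeImplicant {n : ℕ} (f : (Fin n → Bool) → Option Bool) (t : Fin n → Option Bool) : Prop :=
  Implicant f t ∧ ∀ s, Implicant f s → termSet t ⊆ termSet s → termSet s = termSet t

/-- A sufficient reason of `f(x)=1`: a prime implicant of `f` satisfied by `x`. -/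
def SufficientReason {n : ℕ} (f : (Fin n → Bool) → Option Bool) (x : Fin n → Bool)
    (t : Fin n → Option Bool) : Prop :=
  PrimeImplicant f t ∧ Satisfies x t

open Classical in
/-- The constrained partial function `F_C`. -/
noncomputable def constrain {n : ℕ} (F : (Fin n → Bool) → Bool) (C : Set (Fin n → Bool)) :
    (Fin n → Bool) → Option Bool :=
  fun x => if x ∈ C then some (F x) else Option.none

/-- The total completion `f̄` of a partial function: true iff `f x ≠ some false`. -/
def totalCompletion {n : ℕ} (f : (Fin n → Bool) → Option Bool) : (Fin n → Bool) → Bool :=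
  fun x => decide (f x ≠ some false)

theorem stmt0 {n : ℕ} (f g : (Fin n → Bool) → Option Bool)
    (h : ∀ x, g x = some false → f x = some false)
    (x : Fin n → Bool) (hfx : f x = some true) (hgx : g x = some true)
    (t : Fin n → Option Bool) (ht : SufficientReason f x t) :
    ∃ s : Fin n → Option Bool, SufficientReason g x s ∧ termSet t ⊆ termSet s := by
  have htg : Implicant g t := fun y hy hgy => ht.1.1 y hy (h y hgy)
  have hS : ({s | Implicant g s ∧ termSet t ⊆ termSet s} :
      Set (Fin n → Option Bool)).Finite := Set.toFinite _
  obtain ⟨s, hs, hmax⟩ := Set.Finite.exists_maximalFor termSet _ hS ⟨t, htg, subset_rfl⟩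
  refine ⟨s, ⟨⟨hs.1, fun s' hs' hsub => ?_⟩, ?_⟩, hs.2⟩
  · exact Set.Subset.antisymm (hmax ⟨hs', hs.2.trans hsub⟩ hsub) hsub
  · exact hs.2 ht.2
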